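/- Let K and L be finitely generated groups and let G be a finite group acting on a finite set X. For a group homomorphism φ : K → G, let ⟨φ⟩ denote its image, C_G(φ) the centralizer of ⟨φ⟩ in G, and X^{⟨φ⟩} the set of points of X fixed by every element of ⟨φ⟩, which is a C_G(φ)-set. Then the quantity χ_L(X^{⟨φ⟩}; C_G(φ)) depends only on the conjugacy class [φ] of φ, and χ_{K×L}(X;G) = Σ_{[φ] ∈ Hom(K,G)/G} χ_L(X^{⟨φ⟩}; C_G(φ)), where the sum is over the orbits of the conjugation action of G on Hom(K,G). -/

import Mathlib

/-- The generalized orbifold Euler characteristic `χ_K(X;G)` associated to a group `K`: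
`(1/|G|) Σ_{φ ∈ Hom(K×ℤ,G)} |X^{⟨φ⟩}|`. -/
noncomputable def chiGen (K : Type*) [Group K] (G : Type*) [Group G] (X : Type*)
    [MulAction G X] : ℚ :=
  (Nat.card G : ℚ)⁻¹ *
    ∑ᶠ φ : (K × Multiplicative ℤ) →* G,
      (Nat.card {x : X // ∀ k, φ k • x = x} : ℚ)

/-- `G` acts on the set of group homomorphisms `K →* G` by conjugation. -/
instance homConjAction (K G : Type*) [Group K] [Group G] : MulAction G (K →* G) where
  smul g φ := ((MulAut.conj g).toMonoidHom.comp φ)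
  one_smul φ := by
    ext x
    show (MulAut.conj 1) (φ x) = φ x
    simp
  mul_smul g h φ := by
    ext x
    show (MulAut.conj (g * h)) (φ x) = (MulAut.conj g) ((MulAut.conj h) (φ x))
    simp

/-- `X^{⟨φ⟩}`: the set of points of `X` fixed by every element of the image of `φ`. -/
def homFixedPoints {K G : Type*} [Group K] [Group G] (φ : K →* G) (X : Type*)
    [MulAction G X] : Type _ :=
  {x : X // ∀ k, φ k • x = x}

/-- The centralizer `C_G(φ)` of the image of `φ` acts on `X^{⟨φ⟩}`. -/
instance centralizerFixedAction {K G : Type*} [Group K] [Group G] (φ : K →* G) (X : Type*)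
    [MulAction G X] : MulAction ↥(Subgroup.centralizer (Set.range ⇑φ)) (homFixedPoints φ X) where
  smul c x := ⟨(c : G) • x.1, fun k => by
    have hc : φ k * (c : G) = (c : G) * φ k :=
      Subgroup.mem_centralizer_iff.mp c.2 (φ k) ⟨k, rfl⟩
    rw [← mul_smul, hc, mul_smul, x.2 k]⟩
  one_smul x := Subtype.ext <| by
    show ((1 : ↥(Subgroup.centralizer (Set.range ⇑φ))) : G) • x.1 = x.1
    simp
  mul_smul a b x := Subtype.ext <| by
    show ((a * b : ↥(Subgroup.centralizer (Set.range ⇑φ))) : G) • x.1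
        = (a : G) • (b : G) • x.1
    simp [mul_smul]



instance finite_hom_of_fg (K G : Type*) [Group K] [Group.FG K] [Group G] [Finite G] :
    Finite (K →* G) := by
  obtain ⟨S, hS, hfin⟩ := Group.fg_iff.mp ‹Group.FG K›
  have : Finite S := hfin
  have hinj : Function.Injective (fun (φ : K →* G) (s : S) => φ s.1) := by
    intro φ ψ h
    refine MonoidHom.eq_of_eqOn_dense hS fun x hx => ?_
    exact congrFun h ⟨x, hx⟩
  exact Finite.of_injective _ hinj

instance finite_hom_prod (A B G : Type*) [Group A] [Group B] [Group G]
    [Finite (A →* G)] [Finite (B →* G)] : Finite ((A × B) →* G) := by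
  have hinj : Function.Injective
      (fun (φ : (A × B) →* G) => (φ.comp (MonoidHom.inl A B), φ.comp (MonoidHom.inr A B))) := by
    intro φ ψ h
    ext ⟨a, b⟩
    have h1 : φ.comp (MonoidHom.inl A B) = ψ.comp (MonoidHom.inl A B) := congrArg Prod.fst h
    have h2 : φ.comp (MonoidHom.inr A B) = ψ.comp (MonoidHom.inr A B) := congrArg Prod.snd h
    have : (a, b) = (a, 1) * (1, b) := by simp
    rw [this, map_mul, map_mul]
    rw [show ((a,1) : A × B) = MonoidHom.inl A B a from rfl,
        show ((1,b) : A × B) = MonoidHom.inr A B b from rfl,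
        ← MonoidHom.comp_apply, ← MonoidHom.comp_apply, h1, h2]
    rfl
  exact Finite.of_injective _ hinj

instance finite_hom_mz (G : Type*) [Group G] [Finite G] : Finite (Multiplicative ℤ →* G) :=
  Finite.of_surjective (zpowersHom G) (zpowersHom G).surjective

lemma smul_hom_apply {K G : Type*} [Group K] [Group G] (g : G) (φ : K →* G) (k : K) :
    (g • φ) k = g * φ k * g⁻¹ := rfl

lemma smul_fixed {K G X : Type*} [Group K] [Group G] [MulAction G X]
    (φ : K →* G) (c : Subgroup.centralizer (Set.range ⇑φ)) (x : homFixedPoints φ X) :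
    (c • x).1 = (c : G) • x.1 := rfl

lemma mem_stab_iff {K G : Type*} [Group K] [Group G] (g : G) (φ : K →* G) :
    g • φ = φ ↔ g ∈ Subgroup.centralizer (Set.range ⇑φ) := by
  rw [Subgroup.mem_centralizer_iff]
  constructor
  · rintro h _ ⟨k, rfl⟩
    have h1 := congrFun (congrArg (DFunLike.coe) h) k
    rw [smul_hom_apply] at h1
    exact (mul_inv_eq_iff_eq_mul.mp h1).symm
  · intro h
    ext k
    rw [smul_hom_apply, mul_inv_eq_iff_eq_mul]
    exact (h (φ k) ⟨k, rfl⟩).symm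

/-- Transfer `chiGen` along a compatible pair of a group isomorphism and an equivalence. -/
lemma chiGen_congr (L : Type*) [Group L] {C C' Y Y' : Type*} [Group C] [Group C']
    [MulAction C Y] [MulAction C' Y'] (e : C' ≃* C) (f : Y' ≃ Y)
    (h : ∀ (c : C') (y : Y'), f (c • y) = e c • f y) :
    chiGen L C' Y' = chiGen L C Y := by
  unfold chiGen
  rw [Nat.card_congr e.toEquiv]
  congr 1
  have key : ∀ ρ : (L × Multiplicative ℤ) →* C',
      (Nat.card {y : Y' // ∀ k, ρ k • y = y} : ℚ) =
      (Nat.card {y : Y // ∀ k, (e.toMonoidHom.comp ρ) k • y = y} : ℚ) := by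
    intro ρ
    congr 1
    apply Nat.card_congr
    refine Equiv.subtypeEquiv f fun y => ?_
    constructor
    · intro hy k
      rw [MonoidHom.comp_apply, MulEquiv.coe_toMonoidHom, ← h, hy]
    · intro hy k
      apply f.injective
      rw [h]
      exact hy k
  calc ∑ᶠ ρ : (L × Multiplicative ℤ) →* C', (Nat.card {y : Y' // ∀ k, ρ k • y = y} : ℚ)
      = ∑ᶠ ρ : (L × Multiplicative ℤ) →* C',
          (Nat.card {y : Y // ∀ k, (e.toMonoidHom.comp ρ) k • y = y} : ℚ) := by
        exact finsum_congr key
    _ = ∑ᶠ ρ : (L × Multiplicative ℤ) →* C, (Nat.card {y : Y // ∀ k, ρ k • y = y} : ℚ) := by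
        apply finsum_eq_of_bijective (fun ρ => e.toMonoidHom.comp ρ)
        · constructor
          · intro ρ₁ ρ₂ hr
            ext x
            exact e.injective (congrFun (congrArg DFunLike.coe hr) x)
          · intro ρ
            exact ⟨e.symm.toMonoidHom.comp ρ, by ext x; simp⟩
        · intro ρ
          rfl

section conj
variable {K G X : Type*} [Group K] [Group G] [MulAction G X] (g : G) (φ : K →* G)

/-- Conjugation isomorphism between centralizers. -/
def cEquiv : ↥(Subgroup.centralizer (Set.range ⇑(g • φ))) ≃*
    ↥(Subgroup.centralizer (Set.range ⇑φ)) where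
  toFun c := ⟨g⁻¹ * (c : G) * g, by
    rw [Subgroup.mem_centralizer_iff]
    rintro _ ⟨k, rfl⟩
    have hc := Subgroup.mem_centralizer_iff.mp c.2 ((g • φ) k) ⟨k, rfl⟩
    rw [smul_hom_apply] at hc
    have := congrArg (fun z => g⁻¹ * z * g) hc
    simp only [mul_assoc] at this ⊢
    group at this ⊢
    convert this using 1 <;> group⟩
  invFun c := ⟨g * (c : G) * g⁻¹, by
    rw [Subgroup.mem_centralizer_iff]
    rintro _ ⟨k, rfl⟩
    have hc := Subgroup.mem_centralizer_iff.mp c.2 (φ k) ⟨k, rfl⟩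
    rw [smul_hom_apply]
    have := congrArg (fun z => g * z * g⁻¹) hc
    simp only [mul_assoc] at this ⊢
    group at this ⊢
    convert this using 1 <;> group⟩
  left_inv c := Subtype.ext (by group)
  right_inv c := Subtype.ext (by group)
  map_mul' a b := Subtype.ext (by
    show g⁻¹ * ((a : G) * (b : G)) * g = (g⁻¹ * (a : G) * g) * (g⁻¹ * (b : G) * g)
    group)

/-- Translation between fixed-point sets of conjugate homomorphisms. -/
def fEquiv : homFixedPoints (g • φ) X ≃ homFixedPoints φ X where
  toFun x := ⟨g⁻¹ • x.1, fun k => by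
    have hx := x.2 k
    rw [smul_hom_apply] at hx
    have := congrArg (fun z => g⁻¹ • z) hx
    simp only [← mul_smul] at this ⊢
    convert this using 2 <;> group⟩
  invFun x := ⟨g • x.1, fun k => by
    have hx := x.2 k
    rw [smul_hom_apply]
    have := congrArg (fun z => g • z) hx
    simp only [← mul_smul] at this ⊢
    convert this using 2 <;> group⟩
  left_inv x := Subtype.ext (by show g • g⁻¹ • x.1 = x.1; simp)
  right_inv x := Subtype.ext (by show g⁻¹ • g • x.1 = x.1; simp)

lemma fEquiv_smul (c : ↥(Subgroup.centralizer (Set.range ⇑(g • φ))))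
    (x : homFixedPoints (g • φ) X) :
    fEquiv (X := X) g φ (c • x) = cEquiv g φ c • fEquiv (X := X) g φ x := by
  apply Subtype.ext
  show g⁻¹ • ((c : G) • x.1) = (g⁻¹ * (c : G) * g) • (g⁻¹ • x.1)
  simp only [← mul_smul]
  congr 1
  group

lemma part_a (L : Type*) [Group L] :
    chiGen L ↥(Subgroup.centralizer (Set.range ⇑(g • φ))) (homFixedPoints (g • φ) X) =
      chiGen L ↥(Subgroup.centralizer (Set.range ⇑φ)) (homFixedPoints φ X) :=
  chiGen_congr L (cEquiv g φ) (fEquiv g φ) (fEquiv_smul g φ)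

end conj

section prodhom
variable {K L G X : Type*} [Group K] [Group L] [Group G] [MulAction G X]

abbrev M' := Multiplicative ℤ

/-- Reassemble a homomorphism `(K × L) × ℤ →* G` from `φ : K →* G` and
`ρ : L × ℤ →* C_G(φ)`. -/
def toPsi (φ : K →* G) (ρ : (L × Multiplicative ℤ) →* Subgroup.centralizer (Set.range ⇑φ)) :
    ((K × L) × Multiplicative ℤ) →* G where
  toFun a := φ a.1.1 * (ρ (a.1.2, a.2) : G)
  map_one' := by simp [show ((1 : L), (1 : Multiplicative ℤ)) = (1 : L × Multiplicative ℤ) from rfl]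
  map_mul' a b := by
    have hc : (ρ (a.1.2, a.2) : G) * φ b.1.1 = φ b.1.1 * (ρ (a.1.2, a.2) : G) :=
      (Subgroup.mem_centralizer_iff.mp (ρ (a.1.2, a.2)).2 (φ b.1.1) ⟨b.1.1, rfl⟩).symm
    show φ (a.1.1 * b.1.1) * (ρ (a.1.2 * b.1.2, a.2 * b.2) : G) = _
    rw [show ((a.1.2 * b.1.2, a.2 * b.2) : L × Multiplicative ℤ)
        = (a.1.2, a.2) * (b.1.2, b.2) from rfl, map_mul, map_mul]
    push_cast
    rw [mul_assoc, ← mul_assoc (φ b.1.1), ← hc]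
    simp [mul_assoc]

/-- The `K`-component of a homomorphism `(K × L) × ℤ →* G`. -/
def psiFst (ψ : ((K × L) × Multiplicative ℤ) →* G) : K →* G :=
  ψ.comp ((MonoidHom.inl (K × L) (Multiplicative ℤ)).comp (MonoidHom.inl K L))

lemma psiFst_apply (ψ : ((K × L) × Multiplicative ℤ) →* G) (k : K) :
    psiFst ψ k = ψ ((k, 1), 1) := rfl

/-- The `L × ℤ`-component of a homomorphism `(K × L) × ℤ →* G`, valued in the centralizer. -/
def psiSnd (ψ : ((K × L) × Multiplicative ℤ) →* G) :
    (L × Multiplicative ℤ) →* Subgroup.centralizer (Set.range ⇑(psiFst ψ)) where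
  toFun b := ⟨ψ ((1, b.1), b.2), by
    rw [Subgroup.mem_centralizer_iff]
    rintro _ ⟨k, rfl⟩
    rw [psiFst_apply, ← map_mul, ← map_mul]
    congr 1
    simp⟩
  map_one' := Subtype.ext (by simp [show (((1 : K), (1 : L)), (1 : Multiplicative ℤ)) = (1 : (K × L) × Multiplicative ℤ) from rfl])
  map_mul' a b := Subtype.ext (by
    show ψ ((1, a.1 * b.1), a.2 * b.2) = ψ ((1, a.1), a.2) * ψ ((1, b.1), b.2)
    rw [← map_mul]
    congr 1
    simp)

lemma toPsi_psi (ψ : ((K × L) × Multiplicative ℤ) →* G) : toPsi (psiFst ψ) (psiSnd ψ) = ψ := by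
  ext a
  show ψ ((a.1.1, 1), 1) * ψ ((1, a.1.2), a.2) = ψ a
  rw [← map_mul]
  congr 1
  simp

lemma psiFst_toPsi (φ : K →* G)
    (ρ : (L × Multiplicative ℤ) →* Subgroup.centralizer (Set.range ⇑φ)) :
    psiFst (toPsi φ ρ) = φ := by
  ext k
  show φ k * (ρ ((1 : L), (1 : Multiplicative ℤ)) : G) = φ k
  rw [show ((1 : L), (1 : Multiplicative ℤ)) = (1 : L × Multiplicative ℤ) from rfl, map_one]
  simp

lemma psiSnd_toPsi_coe (φ : K →* G)
    (ρ : (L × Multiplicative ℤ) →* Subgroup.centralizer (Set.range ⇑φ))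
    (b : L × Multiplicative ℤ) :
    (psiSnd (toPsi φ ρ) b : G) = (ρ b : G) := by
  show φ 1 * (ρ (b.1, b.2) : G) = (ρ b : G)
  simp

end prodhom

section sigmaequiv
variable {K L G X : Type*} [Group K] [Group L] [Group G] [MulAction G X]

lemma sigma_mk_eq {φ₁ φ₂ : K →* G} (h : φ₁ = φ₂)
    (ρ₁ : (L × Multiplicative ℤ) →* Subgroup.centralizer (Set.range ⇑φ₁))
    (ρ₂ : (L × Multiplicative ℤ) →* Subgroup.centralizer (Set.range ⇑φ₂))
    (h2 : ∀ b, (ρ₁ b : G) = (ρ₂ b : G)) :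
    (⟨φ₁, ρ₁⟩ : Σ φ : K →* G,
        (L × Multiplicative ℤ) →* Subgroup.centralizer (Set.range ⇑φ)) = ⟨φ₂, ρ₂⟩ := by
  subst h
  congr 1
  ext b
  exact h2 b

/-- Homomorphisms `(K × L) × ℤ →* G` are pairs of a homomorphism `φ : K →* G` and a
homomorphism `L × ℤ →* C_G(φ)`. -/
def psiEquiv : (((K × L) × Multiplicative ℤ) →* G) ≃
    Σ φ : K →* G, (L × Multiplicative ℤ) →* Subgroup.centralizer (Set.range ⇑φ) where
  toFun ψ := ⟨psiFst ψ, psiSnd ψ⟩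
  invFun p := toPsi p.1 p.2
  left_inv := toPsi_psi
  right_inv p := sigma_mk_eq (psiFst_toPsi p.1 p.2) _ _ (psiSnd_toPsi_coe p.1 p.2)

/-- The fixed points of `toPsi φ ρ` on `X` are the fixed points of `ρ` on `X^{⟨φ⟩}`. -/
def fixEquiv (φ : K →* G)
    (ρ : (L × Multiplicative ℤ) →* Subgroup.centralizer (Set.range ⇑φ)) :
    {x : X // ∀ a, toPsi φ ρ a • x = x} ≃
      {y : homFixedPoints φ X // ∀ b, ρ b • y = y} where
  toFun x := ⟨⟨x.1, fun k => by
      have h := x.2 ((k, 1), 1)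
      show φ k • x.1 = x.1
      rw [show toPsi φ ρ ((k, 1), 1) = φ k * (ρ ((1 : L), (1 : Multiplicative ℤ)) : G)
        from rfl, show ((1 : L), (1 : Multiplicative ℤ)) = (1 : L × Multiplicative ℤ) from rfl,
        map_one] at h
      simpa using h⟩, fun b => Subtype.ext (by
      show (ρ b : G) • x.1 = x.1
      have h := x.2 ((1, b.1), b.2)
      rw [show toPsi φ ρ ((1, b.1), b.2) = φ 1 * (ρ (b.1, b.2) : G) from rfl] at h
      simpa using h)⟩
  invFun y := ⟨y.1.1, fun a => by
      show (φ a.1.1 * (ρ (a.1.2, a.2) : G)) • y.1.1 = y.1.1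
      have h2 : (ρ (a.1.2, a.2) : G) • y.1.1 = y.1.1 :=
        congrArg Subtype.val (y.2 (a.1.2, a.2))
      rw [mul_smul, h2, y.1.2 a.1.1]⟩
  left_inv x := rfl
  right_inv y := rfl

lemma card_fix_toPsi (φ : K →* G)
    (ρ : (L × Multiplicative ℤ) →* Subgroup.centralizer (Set.range ⇑φ)) :
    Nat.card {x : X // ∀ a, toPsi φ ρ a • x = x} =
      Nat.card {y : homFixedPoints φ X // ∀ b, ρ b • y = y} :=
  Nat.card_congr (fixEquiv φ ρ)

lemma stab_eq_centralizer (φ : K →* G) :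
    MulAction.stabilizer G φ = Subgroup.centralizer (Set.range ⇑φ) := by
  ext g
  rw [MulAction.mem_stabilizer_iff]
  exact mem_stab_iff g φ

end sigmaequiv

theorem chiGen_prod_group_eq_sum_centralizer (K L : Type) [Group K] [Group.FG K]
    [Group L] [Group.FG L] (G X : Type) [Group G] [Finite G] [MulAction G X] [Finite X] :
    (∀ (φ : K →* G) (g : G),
      chiGen L ↥(Subgroup.centralizer (Set.range ⇑(g • φ))) (homFixedPoints (g • φ) X) =
        chiGen L ↥(Subgroup.centralizer (Set.range ⇑φ)) (homFixedPoints φ X)) ∧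
      chiGen (K × L) G X =
        ∑ᶠ q : Quotient (MulAction.orbitRel G (K →* G)),
          chiGen L ↥(Subgroup.centralizer (Set.range ⇑(Quotient.out q)))
            (homFixedPoints (Quotient.out q) X) := by
  refine ⟨fun φ g => part_a g φ L, ?_⟩
  classical
  letI : Fintype (((K × L) × Multiplicative ℤ) →* G) := Fintype.ofFinite _
  letI : Fintype (K →* G) := Fintype.ofFinite _
  letI instH : ∀ φ : K →* G,
      Fintype ((L × Multiplicative ℤ) →* ↥(Subgroup.centralizer (Set.range ⇑φ))) :=
    fun _ => Fintype.ofFinite _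
  letI : Fintype (Quotient (MulAction.orbitRel G (K →* G))) := Fintype.ofFinite _
  letI instO : ∀ q : Quotient (MulAction.orbitRel G (K →* G)),
      Fintype (MulAction.orbit G (Quotient.out q)) := fun _ => Fintype.ofFinite _
  have hG0 : (Nat.card G : ℚ) ≠ 0 := by
    exact_mod_cast (Nat.card_pos (α := G)).ne'
  -- notation
  set F : (K →* G) → ℚ := fun φ =>
    chiGen L ↥(Subgroup.centralizer (Set.range ⇑φ)) (homFixedPoints φ X) with hF
  -- inner sum identity
  have hinner : ∀ φ : K →* G,
      ∑ ρ : (L × Multiplicative ℤ) →* ↥(Subgroup.centralizer (Set.range ⇑φ)),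
        (Nat.card {y : homFixedPoints φ X // ∀ b, ρ b • y = y} : ℚ)
        = (Nat.card ↥(Subgroup.centralizer (Set.range ⇑φ)) : ℚ) * F φ := by
    intro φ
    have hC0 : (Nat.card ↥(Subgroup.centralizer (Set.range ⇑φ)) : ℚ) ≠ 0 := by
      exact_mod_cast (Nat.card_pos (α := ↥(Subgroup.centralizer (Set.range ⇑φ)))).ne'
    rw [hF]
    show _ = _ * chiGen L _ _
    unfold chiGen
    rw [finsum_eq_sum_of_fintype, ← mul_assoc, mul_inv_cancel₀ hC0, one_mul]
  -- conjugation invariance of the weighted term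
  have hH : ∀ (g : G) (φ : K →* G),
      (Nat.card ↥(Subgroup.centralizer (Set.range ⇑(g • φ))) : ℚ) * F (g • φ)
        = (Nat.card ↥(Subgroup.centralizer (Set.range ⇑φ)) : ℚ) * F φ := by
    intro g φ
    rw [hF]
    show _ * chiGen L _ _ = _ * chiGen L _ _
    rw [part_a g φ L, Nat.card_congr (cEquiv g φ).toEquiv]
  -- orbit-stabilizer
  have horb : ∀ φ : K →* G,
      Nat.card (MulAction.orbit G φ) *
        Nat.card ↥(Subgroup.centralizer (Set.range ⇑φ)) = Nat.card G := by
    intro φ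
    rw [← stab_eq_centralizer φ, ← Nat.card_prod]
    exact Nat.card_congr (MulAction.orbitProdStabilizerEquivGroup G φ)
  -- main computation
  have step2 : ∑ ψ : ((K × L) × Multiplicative ℤ) →* G,
      (Nat.card {x : X // ∀ a, ψ a • x = x} : ℚ)
      = ∑ p : (Σ φ : K →* G,
          (L × Multiplicative ℤ) →* ↥(Subgroup.centralizer (Set.range ⇑φ))),
          (Nat.card {y : homFixedPoints p.1 X // ∀ b, p.2 b • y = y} : ℚ) := by
    apply Fintype.sum_equiv psiEquiv
    intro ψ
    conv_lhs => rw [← toPsi_psi ψ]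
    exact_mod_cast card_fix_toPsi (X := X) (psiFst ψ) (psiSnd ψ)
  have step3 : ∑ p : (Σ φ : K →* G,
          (L × Multiplicative ℤ) →* ↥(Subgroup.centralizer (Set.range ⇑φ))),
          (Nat.card {y : homFixedPoints p.1 X // ∀ b, p.2 b • y = y} : ℚ)
      = ∑ φ : K →* G, (Nat.card ↥(Subgroup.centralizer (Set.range ⇑φ)) : ℚ) * F φ := by
    rw [← Finset.univ_sigma_univ, Finset.sum_sigma]
    exact Finset.sum_congr rfl fun φ _ => hinner φ
  have step5 : ∑ φ : K →* G, (Nat.card ↥(Subgroup.centralizer (Set.range ⇑φ)) : ℚ) * F φ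
      = ∑ q : Quotient (MulAction.orbitRel G (K →* G)),
          (Nat.card G : ℚ) * F (Quotient.out q) := by
    calc ∑ φ : K →* G, (Nat.card ↥(Subgroup.centralizer (Set.range ⇑φ)) : ℚ) * F φ
        = ∑ p : (Σ ω : MulAction.orbitRel.Quotient G (K →* G),
            MulAction.orbit G (Quotient.out ω)),
            (Nat.card ↥(Subgroup.centralizer (Set.range ⇑(p.2 : K →* G))) : ℚ)
              * F (p.2 : K →* G) := by
          apply Fintype.sum_equiv (MulAction.selfEquivSigmaOrbits G (K →* G))
          intro φ
          rfl
      _ = ∑ ω : MulAction.orbitRel.Quotient G (K →* G),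
            ∑ x : MulAction.orbit G (Quotient.out ω),
            (Nat.card ↥(Subgroup.centralizer (Set.range ⇑(x : K →* G))) : ℚ)
              * F (x : K →* G) := by
          rw [← Finset.univ_sigma_univ, Finset.sum_sigma]
      _ = ∑ q : Quotient (MulAction.orbitRel G (K →* G)),
            (Nat.card G : ℚ) * F (Quotient.out q) := by
          refine Finset.sum_congr rfl fun ω _ => ?_
          have hconst : ∀ x : MulAction.orbit G (Quotient.out ω),
              (Nat.card ↥(Subgroup.centralizer (Set.range ⇑(x : K →* G))) : ℚ)
                * F (x : K →* G)
              = (Nat.card ↥(Subgroup.centralizer (Set.range ⇑(Quotient.out ω))) : ℚ)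
                * F (Quotient.out ω) := by
            rintro ⟨x, hx⟩
            obtain ⟨g, rfl⟩ := MulAction.mem_orbit_iff.mp hx
            exact hH g (Quotient.out ω)
          rw [Finset.sum_congr rfl fun x _ => hconst x, Finset.sum_const, Finset.card_univ,
            nsmul_eq_mul, ← mul_assoc]
          congr 1
          rw [← Nat.card_eq_fintype_card, ← Nat.cast_mul, horb (Quotient.out ω)]
  show (Nat.card G : ℚ)⁻¹ * ∑ᶠ ψ : ((K × L) × Multiplicative ℤ) →* G,
      (Nat.card {x : X // ∀ a, ψ a • x = x} : ℚ) = _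
  rw [finsum_eq_sum_of_fintype, step2, step3, step5, Finset.mul_sum]
  rw [finsum_eq_sum_of_fintype]
  refine Finset.sum_congr rfl fun q _ => ?_
  rw [← mul_assoc, inv_mul_cancel₀ hG0, one_mul]
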